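/- Let ℒ be a bilinear functional with ℒ(pₙ, sₘ) = δₙₘ, and suppose x(𝟙 + L̂)p̂ = Â p̂ and ∂_y Φᵗ(𝟙 + L̂) = -Φᵗ Â hold (where Φ = s e^{-V₂}, p̂ = (𝟙 + L̂)^{-1} p e^{-V₁} up to the exponential factor). Then for the projector Πₙ (identity on indices 0,…,n-1, zero elsewhere): (x + ∂_y)[Φᵗ(y)(𝟙 + L̂)Πₙ(𝟙 + L̂)^{-1}Ψ(x)] = Φᵗ(y)·[xL̂ - Â, Πₙ]·(𝟙 + L̂)^{-1}Ψ(x), where [·,·] is the matrix commutator. -/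

import Mathlib

/-- Christoffel–Darboux commutator identity: with `Ψ̂ = (𝟙 + L̂)⁻¹Ψ` (i.e.
`(𝟙 + L̂)Ψ̂ = Ψ`), the recurrence `x(𝟙 + L̂)Ψ̂ = ÂΨ̂`, and the differential
recurrence `∂_y Φᵗ(𝟙 + L̂) = -ΦᵗÂ`, one has, for the projector `Πₙ`,
`(x + ∂_y)[Φᵗ(y)(𝟙 + L̂)Πₙ(𝟙 + L̂)⁻¹Ψ(x)] = Φᵗ(y)[xL̂ - Â, Πₙ](𝟙 + L̂)⁻¹Ψ(x)`.
Here `L̂` is strictly lower triangular with band width `b`, `Â` is lower-Hessenberg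
with band width `b`, and all matrix products are the indicated finite sums. -/
theorem christoffel_darboux_commutator (b n : ℕ)
    (φ ψ ψh : ℕ → ℂ → ℂ)
    (Lh Ah : ℕ → ℕ → ℂ)
    (hLh_lower : ∀ i j, i ≤ j → Lh i j = 0)
    (hLh_band : ∀ i j, j + b < i → Lh i j = 0)
    (hAh_hess : ∀ i j, i + 1 < j → Ah i j = 0)
    (hAh_band : ∀ i j, j + b < i → Ah i j = 0)
    -- Ψ = (𝟙 + L̂)Ψ̂
    (hinv : ∀ m x, ψ m x = ψh m x + ∑ k ∈ Finset.range m, Lh m k * ψh k x)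
    -- x(𝟙 + L̂)Ψ̂ = ÂΨ̂
    (hmult : ∀ m x, x * (ψh m x + ∑ k ∈ Finset.range m, Lh m k * ψh k x)
        = ∑ k ∈ Finset.range (m + 2), Ah m k * ψh k x)
    -- ∂_y Φᵗ(𝟙 + L̂) = -ΦᵗÂ (columnwise)
    (hdiff : ∀ k y, HasDerivAt
        (fun y' => φ k y' + ∑ j ∈ Finset.Ioc k (k + b), Lh j k * φ j y')
        (-(∑ j ∈ Finset.range (k + b + 2), Ah j k * φ j y)) y) :
    ∀ x y : ℂ, HasDerivAt
      (fun y' => ∑ k ∈ Finset.range n,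
        (φ k y' + ∑ j ∈ Finset.Ioc k (k + b), Lh j k * φ j y') * ψh k x)
      ((∑ i ∈ Finset.range (n + b + 2), ∑ j ∈ Finset.range (n + b + 2),
          φ i y * ((x * Lh i j - Ah i j) *
            ((if j < n then (1 : ℂ) else 0) - (if i < n then (1 : ℂ) else 0))) *
            ψh j x)
        - x * ∑ k ∈ Finset.range n,
            (φ k y + ∑ j ∈ Finset.Ioc k (k + b), Lh j k * φ j y) * ψh k x)
      y := by
  intro x y
  have h1 : HasDerivAt
      (fun y' => ∑ k ∈ Finset.range n,
        (φ k y' + ∑ j ∈ Finset.Ioc k (k + b), Lh j k * φ j y') * ψh k x)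
      (∑ k ∈ Finset.range n,
        (-(∑ j ∈ Finset.range (k + b + 2), Ah j k * φ j y)) * ψh k x) y :=
    HasDerivAt.fun_sum fun k _ => (hdiff k y).mul_const _
  convert h1 using 1
  have hsub : Finset.range n ⊆ Finset.range (n + b + 2) :=
    Finset.range_subset_range.2 (by omega)
  -- column evaluation of Φᵗ(xL̂ - Â)
  have hT1 : ∀ j < n,
      (∑ i ∈ Finset.range (n + b + 2), φ i y * (x * Lh i j - Ah i j))
      = x * (∑ i ∈ Finset.Ioc j (j + b), Lh i j * φ i y)
        - ∑ i ∈ Finset.range (j + b + 2), Ah i j * φ i y := by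
    intro j hj
    have e1 : ∑ i ∈ Finset.Ioc j (j + b), φ i y * (x * Lh i j)
        = ∑ i ∈ Finset.range (n + b + 2), φ i y * (x * Lh i j) := by
      apply Finset.sum_subset
      · intro i hi
        rw [Finset.mem_Ioc] at hi
        rw [Finset.mem_range]; omega
      · intro i _ hi
        rw [Finset.mem_Ioc, not_and_or, not_lt, not_le] at hi
        rcases hi with h | h
        · rw [hLh_lower i j h]; ring
        · rw [hLh_band i j h]; ring
    have e2 : ∑ i ∈ Finset.range (j + b + 2), φ i y * Ah i j
        = ∑ i ∈ Finset.range (n + b + 2), φ i y * Ah i j := by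
      apply Finset.sum_subset
      · intro i hi
        rw [Finset.mem_range] at *; omega
      · intro i _ hi
        rw [Finset.mem_range, not_lt] at hi
        rw [hAh_band i j (by omega)]; ring
    calc ∑ i ∈ Finset.range (n + b + 2), φ i y * (x * Lh i j - Ah i j)
        = (∑ i ∈ Finset.range (n + b + 2), φ i y * (x * Lh i j))
          - ∑ i ∈ Finset.range (n + b + 2), φ i y * Ah i j := by
          rw [← Finset.sum_sub_distrib]
          exact Finset.sum_congr rfl fun i _ => by ring
      _ = _ := by
          rw [← e1, ← e2, Finset.mul_sum]
          congr 1
          · exact Finset.sum_congr rfl fun i _ => by ring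
          · exact Finset.sum_congr rfl fun i _ => by ring
  -- row evaluation of (xL̂ - Â)Ψ̂
  have hT2 : ∀ i < n,
      (∑ j ∈ Finset.range (n + b + 2), (x * Lh i j - Ah i j) * ψh j x)
      = -(x * ψh i x) := by
    intro i hi
    have e1 : ∑ j ∈ Finset.range i, (x * Lh i j) * ψh j x
        = ∑ j ∈ Finset.range (n + b + 2), (x * Lh i j) * ψh j x := by
      apply Finset.sum_subset
      · intro j hj; rw [Finset.mem_range] at *; omega
      · intro j _ hj
        rw [Finset.mem_range, not_lt] at hj
        rw [hLh_lower i j hj]; ring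
    have e2 : ∑ j ∈ Finset.range (i + 2), Ah i j * ψh j x
        = ∑ j ∈ Finset.range (n + b + 2), Ah i j * ψh j x := by
      apply Finset.sum_subset
      · intro j hj; rw [Finset.mem_range] at *; omega
      · intro j _ hj
        rw [Finset.mem_range, not_lt] at hj
        rw [hAh_hess i j (by omega)]; ring
    have hm := hmult i x
    have e3 : ∑ j ∈ Finset.range i, (x * Lh i j) * ψh j x
        = x * ∑ j ∈ Finset.range i, Lh i j * ψh j x := by
      rw [Finset.mul_sum]
      exact Finset.sum_congr rfl fun j _ => by ring
    calc ∑ j ∈ Finset.range (n + b + 2), (x * Lh i j - Ah i j) * ψh j x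
        = (∑ j ∈ Finset.range (n + b + 2), (x * Lh i j) * ψh j x)
          - ∑ j ∈ Finset.range (n + b + 2), Ah i j * ψh j x := by
          rw [← Finset.sum_sub_distrib]
          exact Finset.sum_congr rfl fun j _ => by ring
      _ = (∑ j ∈ Finset.range i, (x * Lh i j) * ψh j x)
          - ∑ j ∈ Finset.range (i + 2), Ah i j * ψh j x := by rw [e1, e2]
      _ = -(x * ψh i x) := by rw [e3, ← hm]; ring
  -- split the double sum into the two projector pieces
  have stepA : (∑ i ∈ Finset.range (n + b + 2), ∑ j ∈ Finset.range (n + b + 2),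
        φ i y * ((x * Lh i j - Ah i j) *
          ((if j < n then (1 : ℂ) else 0) - (if i < n then (1 : ℂ) else 0))) *
          ψh j x)
      = (∑ i ∈ Finset.range (n + b + 2), ∑ j ∈ Finset.range (n + b + 2),
          (if j < n then (1 : ℂ) else 0) * (φ i y * (x * Lh i j - Ah i j)) * ψh j x)
        - (∑ i ∈ Finset.range (n + b + 2), ∑ j ∈ Finset.range (n + b + 2),
          (if i < n then (1 : ℂ) else 0) * (φ i y *
            ((x * Lh i j - Ah i j) * ψh j x))) := by
    rw [← Finset.sum_sub_distrib]
    refine Finset.sum_congr rfl fun i _ => ?_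
    rw [← Finset.sum_sub_distrib]
    exact Finset.sum_congr rfl fun j _ => by ring
  have stepB : (∑ i ∈ Finset.range (n + b + 2), ∑ j ∈ Finset.range (n + b + 2),
        (if j < n then (1 : ℂ) else 0) * (φ i y * (x * Lh i j - Ah i j)) * ψh j x)
      = ∑ j ∈ Finset.range n,
          (x * (∑ i ∈ Finset.Ioc j (j + b), Lh i j * φ i y)
            - ∑ i ∈ Finset.range (j + b + 2), Ah i j * φ i y) * ψh j x := by
    rw [Finset.sum_comm]
    rw [← Finset.sum_subset hsub (by
      intro j _ hj
      rw [Finset.mem_range, not_lt] at hj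
      simp [if_neg (not_lt.2 hj)])]
    refine Finset.sum_congr rfl fun j hj => ?_
    rw [Finset.mem_range] at hj
    simp only [if_pos hj, one_mul]
    rw [← Finset.sum_mul, hT1 j hj]
  have stepC : (∑ i ∈ Finset.range (n + b + 2), ∑ j ∈ Finset.range (n + b + 2),
        (if i < n then (1 : ℂ) else 0) * (φ i y *
          ((x * Lh i j - Ah i j) * ψh j x)))
      = ∑ i ∈ Finset.range n, φ i y * (-(x * ψh i x)) := by
    rw [← Finset.sum_subset hsub (by
      intro i _ hi
      rw [Finset.mem_range, not_lt] at hi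
      simp [if_neg (not_lt.2 hi)])]
    refine Finset.sum_congr rfl fun i hi => ?_
    rw [Finset.mem_range] at hi
    simp only [if_pos hi, one_mul]
    rw [← Finset.mul_sum, hT2 i hi]
  rw [stepA, stepB, stepC, Finset.mul_sum, sub_sub, ← Finset.sum_add_distrib,
    ← Finset.sum_sub_distrib]
  exact Finset.sum_congr rfl fun k _ => by ring
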